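/- For every n ≥ 1, the map σ̂_n is an involution: σ̂_n(σ̂_n(k)) = k for all k ∈ I_n. -/

import Mathlib

/-- The Sierpinski gasket pattern: `g n m` is `g_m^{(n)} ∈ {0,1}` for `1 ≤ m ≤ n`,
defined by `g_1^{(n)} = g_n^{(n)} = 1` and
`g_m^{(n)} = g_{m-1}^{(n-1)} + g_m^{(n-1)} mod 2` for `2 ≤ m ≤ n−1`. -/
def g : ℕ → ℕ → ℕ
  | 0, _ => 0
  | n + 1, m =>
    if m = 1 ∨ m = n + 1 then 1
    else if 2 ≤ m ∧ m ≤ n then (g n (m - 1) + g n m) % 2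
    else 0

/-- The doubling operators `T_0` and `T_1` on binary tuples. -/
def Tmap (α : ℕ) (s : List ℕ) : List ℕ :=
  if α = 0 then s ++ s else s ++ s.map (fun x => 1 - x)

/-- The binary tuple `ν⁽ⁿ⁾ = (T_{g_1^{(n)}} ∘ T_{g_2^{(n)}} ∘ ⋯ ∘ T_{g_{n-1}^{(n)}})(0)`,
of length `2^{n-1}`. -/
def nuList (n : ℕ) : List ℕ :=
  (List.range (n - 1)).foldr (fun i acc => Tmap (g n (i + 1)) acc) [0]

/-- The entry `ν_m^{(n)}`. -/
def nu (n m : ℕ) : ℕ := (nuList n).getD m 0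

/-- The map `σ̂_n` on `I_n = {0, …, 2ⁿ−1}`: `σ̂_1 = id` and
`σ̂_n(j) = σ̂_{n-1}(j mod 2^{n-1}) + 2^{n-1}·c_j` where `c_{2m} = 1 − ν_m^{(n)}` and
`c_{2m+1} = ν_m^{(n)}`. -/
def sigmaHat : ℕ → ℕ → ℕ
  | 0, j => j
  | 1, j => j
  | n + 2, j =>
    sigmaHat (n + 1) (j % 2 ^ (n + 1)) +
      2 ^ (n + 1) * (if j % 2 = 0 then 1 - nu (n + 2) (j / 2) else nu (n + 2) (j / 2))
/-! ### Auxiliary lemmas -/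


lemma aux_mod_two_le (x : ℕ) : x % 2 ≤ 1 := Nat.lt_succ_iff.mp (Nat.mod_lt _ (by norm_num))

lemma aux_eq_of_le_one_cast {x y : ℕ} (hx : x ≤ 1) (hy : y ≤ 1)
    (h : (x : ZMod 2) = (y : ZMod 2)) : x = y := by
  interval_cases x <;> interval_cases y <;> simp_all

lemma aux_cast_one_sub {v : ℕ} (hv : v ≤ 1) : (((1 - v : ℕ)) : ZMod 2) = 1 + (v : ZMod 2) := by
  interval_cases v <;> decide

lemma aux_div_pow_add (y q N i : ℕ) (h : i ≤ N) :
    (2 ^ N * q + y) / 2 ^ i = 2 ^ (N - i) * q + y / 2 ^ i := by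
  rw [show (2:ℕ) ^ N = 2 ^ i * 2 ^ (N - i) by rw [← pow_add]; congr 1; omega,
    mul_assoc, Nat.mul_add_div (Nat.pow_pos (n := i) (by norm_num))]

lemma aux_two_pow_cast_zero {k : ℕ} (hk : 1 ≤ k) : ((2 ^ k : ℕ) : ZMod 2) = 0 := by
  push_cast
  rw [show ((2:ZMod 2)) = 0 by decide]
  exact zero_pow (by omega)

lemma g_le_one (n m : ℕ) : g n m ≤ 1 := by
  cases n with
  | zero => simp [g]
  | succ n =>
    rw [g]
    split
    · exact le_refl 1
    split
    · exact aux_mod_two_le _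
    · exact Nat.zero_le 1

lemma g_eq (n : ℕ) : ∀ m, 1 ≤ m → m ≤ n → g n m = Nat.choose (n - 1) (m - 1) % 2 := by
  induction n with
  | zero => omega
  | succ n ih =>
    intro m h1 h2
    rw [g]
    by_cases hm : m = 1 ∨ m = n + 1
    · rw [if_pos hm]
      rcases hm with h | h <;> subst h <;> simp
    · push_neg at hm
      rw [if_neg (by omega), if_pos (by omega)]
      rw [ih (m - 1) (by omega) (by omega), ih m (by omega) (by omega)]
      have key : Nat.choose n (m - 1) = Nat.choose (n - 1) (m - 1 - 1) + Nat.choose (n - 1) (m - 1) := by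
        obtain ⟨n', rfl⟩ : ∃ n', n = n' + 1 := ⟨n - 1, by omega⟩
        obtain ⟨m', rfl⟩ : ∃ m', m = m' + 2 := ⟨m - 2, by omega⟩
        simp [Nat.choose_succ_succ]
      rw [Nat.add_sub_cancel, key, Nat.add_mod]
      simp [Nat.mod_mod_of_dvd]

lemma Tfold_spec (bs : List ℕ) (hb : ∀ x ∈ bs, x ≤ 1) :
    (bs.foldr Tmap [0]).length = 2 ^ bs.length ∧
    (∀ x ∈ bs.foldr Tmap [0], x ≤ 1) ∧
    ∀ m < 2 ^ bs.length,
      (((bs.foldr Tmap [0]).getD m 0 : ℕ) : ZMod 2) =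
        ∑ i ∈ Finset.range bs.length,
          ((m / 2 ^ i : ℕ) : ZMod 2) * ((bs.getD (bs.length - 1 - i) 0 : ℕ) : ZMod 2) := by
  induction bs with
  | nil =>
    refine ⟨rfl, by simp, ?_⟩
    intro m hm
    have : m = 0 := by simpa using Nat.lt_one_iff.mp (by simpa using hm)
    subst this
    simp
  | cons b bs ih =>
    obtain ⟨hlen, hle, hval⟩ := ih (fun x hx => hb x (List.mem_cons_of_mem b hx))
    have hb1 : b ≤ 1 := hb b List.mem_cons_self
    set L := bs.foldr Tmap [0] with hL
    set len := bs.length with hlendef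
    have hfold : (b :: bs).foldr Tmap [0] = Tmap b L := rfl
    have hlen2 : (Tmap b L).length = 2 ^ (len + 1) := by
      unfold Tmap
      split <;> simp [hlen, pow_succ] <;> ring
    have hle2 : ∀ x ∈ Tmap b L, x ≤ 1 := by
      intro x hx
      unfold Tmap at hx
      split at hx <;> rw [List.mem_append] at hx
      · rcases hx with h | h <;> exact hle x h
      · rcases hx with h | h
        · exact hle x h
        · obtain ⟨y, _, rfl⟩ := List.mem_map.mp h
          omega
    refine ⟨hfold ▸ hlen2, hfold ▸ hle2, ?_⟩
    intro m hm
    rw [hfold]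
    simp only [List.length_cons] at hm ⊢
    by_cases hcase : m < 2 ^ len
    · -- low half
      have hgd : (Tmap b L).getD m 0 = L.getD m 0 := by
        unfold Tmap
        split <;> exact List.getD_append _ _ _ _ (by omega)
      rw [hgd, hval m hcase, Finset.sum_range_succ]
      have htop : m / 2 ^ len = 0 := Nat.div_eq_of_lt hcase
      rw [htop]
      simp only [Nat.cast_zero, zero_mul, add_zero]
      apply Finset.sum_congr rfl
      intro i hi
      rw [Finset.mem_range] at hi
      congr 2
      have : len + 1 - 1 - i = (len - 1 - i) + 1 := by omega
      rw [this, List.getD_cons_succ]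
    · -- high half
      push_neg at hcase
      have hmlt : m - 2 ^ len < 2 ^ len := by
        rw [← hlendef, pow_succ] at hm
        omega
      set y := m - 2 ^ len with hy
      have hmy : m = 2 ^ len * 1 + y := by omega
      have hdiv : ∀ i ≤ len, m / 2 ^ i = 2 ^ (len - i) + y / 2 ^ i := by
        intro i hi
        rw [hmy, aux_div_pow_add y 1 len i hi, mul_one]
      have hcast : ∀ i < len, ((m / 2 ^ i : ℕ) : ZMod 2) = ((y / 2 ^ i : ℕ) : ZMod 2) := by
        intro i hi
        rw [hdiv i (by omega)]
        push_cast
        rw [show ((2:ZMod 2)) = 0 by decide, zero_pow (by omega : len - i ≠ 0)]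
        ring
      have htopdiv : m / 2 ^ len = 1 := by
        rw [hdiv len le_rfl]
        simp [Nat.div_eq_of_lt hmlt]
      have hrhs : ∑ i ∈ Finset.range (len + 1),
          ((m / 2 ^ i : ℕ) : ZMod 2) * (((b :: bs).getD (len + 1 - 1 - i) 0 : ℕ) : ZMod 2)
          = (b : ZMod 2) + ∑ i ∈ Finset.range len,
              ((y / 2 ^ i : ℕ) : ZMod 2) * ((bs.getD (len - 1 - i) 0 : ℕ) : ZMod 2) := by
        rw [Finset.sum_range_succ, htopdiv]
        have hidx : len + 1 - 1 - len = 0 := by omega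
        rw [hidx, List.getD_cons_zero]
        rw [add_comm]
        congr 1
        · simp
        · apply Finset.sum_congr rfl
          intro i hi
          rw [Finset.mem_range] at hi
          rw [hcast i hi]
          congr 2
          have : len + 1 - 1 - i = (len - 1 - i) + 1 := by omega
          rw [this, List.getD_cons_succ]
      rw [hrhs]
      unfold Tmap
      by_cases hbz : b = 0
      · rw [if_pos hbz]
        rw [List.getD_append_right _ _ _ _ (by omega), hlen]
        rw [← hy, hval y hmlt, hbz]
        simp
      · rw [if_neg hbz]
        have hb' : b = 1 := by omega
        rw [List.getD_append_right _ _ _ _ (by omega), hlen, ← hy]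
        have : (L.map (fun x => 1 - x)).getD y 0 = 1 - L.getD y 0 := by
          rw [List.getD_eq_getElem _ _ (by simp [hlen, hmlt]), List.getElem_map,
            List.getD_eq_getElem _ _ (by simpa [hlen] using hmlt)]
        have hvle : L.getD y 0 ≤ 1 := by
          rw [List.getD_eq_getElem _ _ (by simpa [hlen] using hmlt)]
          exact hle _ (List.getElem_mem _)
        rw [this, aux_cast_one_sub hvle, hval y hmlt, hb']
        push_cast
        ring

/-! ### `nu` lemmas -/

lemma nuList_eq_fold (n : ℕ) :
    nuList n = ((List.range (n - 1)).map (fun i => g n (i + 1))).foldr Tmap [0] := by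
  rw [nuList, List.foldr_map]

lemma nu_le_one (n m : ℕ) : nu n m ≤ 1 := by
  obtain ⟨-, hle, -⟩ := Tfold_spec ((List.range (n - 1)).map (fun i => g n (i + 1)))
    (by
      intro x hx
      obtain ⟨i, -, rfl⟩ := List.mem_map.mp hx
      exact g_le_one n (i + 1))
  rw [nu, nuList_eq_fold]
  by_cases h : m < (((List.range (n - 1)).map (fun i => g n (i + 1))).foldr Tmap [0]).length
  · rw [List.getD_eq_getElem _ _ h]
    exact hle _ (List.getElem_mem _)
  · rw [List.getD_eq_default _ _ (by omega)]
    omega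

lemma nu_cast (n : ℕ) (hn : 1 ≤ n) (m : ℕ) (hm : m < 2 ^ (n - 1)) :
    ((nu n m : ℕ) : ZMod 2) =
      ∑ i ∈ Finset.range (n - 1),
        ((m / 2 ^ i : ℕ) : ZMod 2) * ((Nat.choose (n - 1) (n - 2 - i) : ℕ) : ZMod 2) := by
  set bs := (List.range (n - 1)).map (fun i => g n (i + 1)) with hbs
  have hblen : bs.length = n - 1 := by simp [hbs]
  obtain ⟨-, -, hval⟩ := Tfold_spec bs
    (by
      intro x hx
      obtain ⟨i, -, rfl⟩ := List.mem_map.mp hx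
      exact g_le_one n (i + 1))
  rw [nu, nuList_eq_fold, ← hbs]
  rw [hval m (by rwa [hblen]), hblen]
  apply Finset.sum_congr rfl
  intro i hi
  rw [Finset.mem_range] at hi
  congr 1
  have hidx : bs.getD (n - 1 - 1 - i) 0 = g n (n - 1 - i) := by
    rw [List.getD_eq_getElem _ _ (by simp [hblen]; omega)]
    simp only [hbs, List.getElem_map, List.getElem_range]
    congr 1
    omega
  rw [hidx, g_eq n (n - 1 - i) (by omega) (by omega)]
  rw [show n - 1 - i - 1 = n - 2 - i by omega]
  rw [ZMod.natCast_mod]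

/-! ### The explicit bit formula -/

/-- The `k`-th bit of `σ̂ₙ j` (for `k < n`, `j < 2ⁿ`). -/
def Fb (k j : ℕ) : ℕ :=
  if k = 0 then j % 2
  else (1 + ∑ i ∈ Finset.range (k + 1), Nat.choose k i * (j / 2 ^ i)) % 2

lemma Fb_le_one (k j : ℕ) : Fb k j ≤ 1 := by
  rw [Fb]; split <;> exact aux_mod_two_le _

lemma Fb_cast (k j : ℕ) : ((Fb k j : ℕ) : ZMod 2) =
    if k = 0 then (j : ZMod 2)
    else 1 + ∑ i ∈ Finset.range (k + 1),
      ((Nat.choose k i : ℕ) : ZMod 2) * ((j / 2 ^ i : ℕ) : ZMod 2) := by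
  rw [Fb]
  split
  · rw [ZMod.natCast_mod]
  · rw [ZMod.natCast_mod]
    push_cast
    ring

lemma Fb_mod (k j N : ℕ) (h : k < N) : Fb k (j % 2 ^ N) = Fb k j := by
  apply aux_eq_of_le_one_cast (Fb_le_one _ _) (Fb_le_one _ _)
  have hdivcast : ∀ i ≤ k, (((j % 2 ^ N) / 2 ^ i : ℕ) : ZMod 2) = ((j / 2 ^ i : ℕ) : ZMod 2) := by
    intro i hi
    have : j / 2 ^ i = 2 ^ (N - i) * (j / 2 ^ N) + (j % 2 ^ N) / 2 ^ i := by
      conv_lhs => rw [← Nat.div_add_mod j (2 ^ N)]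
      exact aux_div_pow_add _ _ _ _ (by omega)
    rw [this]
    push_cast
    rw [show ((2:ZMod 2)) = 0 by decide, zero_pow (by omega : N - i ≠ 0)]
    ring
  rw [Fb_cast, Fb_cast]
  split
  · next hk =>
    subst hk
    have := hdivcast 0 le_rfl
    simpa using this
  · congr 1
    apply Finset.sum_congr rfl
    intro i hi
    rw [Finset.mem_range] at hi
    rw [hdivcast i (by omega)]

/-! ### `σ̂` equals the bit formula -/

lemma sigmaHat_eq (n : ℕ) (hn : 1 ≤ n) :
    ∀ j < 2 ^ n, sigmaHat n j = ∑ k ∈ Finset.range n, 2 ^ k * Fb k j := by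
  induction n, hn using Nat.le_induction with
  | base =>
    intro j hj
    interval_cases j <;> simp [sigmaHat, Fb]
  | succ n hn' ih =>
    intro j hj
    obtain ⟨p, rfl⟩ : ∃ p, n = p + 1 := ⟨n - 1, by omega⟩
    rw [show p + 1 + 1 = p + 2 by rfl, sigmaHat]
    rw [ih (j % 2 ^ (p + 1)) (Nat.mod_lt _ (Nat.pow_pos (by norm_num)))]
    conv_rhs => rw [Finset.sum_range_succ]
    congr 1
    · apply Finset.sum_congr rfl
      intro k hk
      rw [Finset.mem_range] at hk
      rw [Fb_mod k j (p + 1) hk]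
    · congr 1
      -- c = Fb (p+1) j
      apply aux_eq_of_le_one_cast
      · split <;> [skip; exact nu_le_one _ _]
        omega
      · exact Fb_le_one _ _
      have hnu_le := nu_le_one (p + 2) (j / 2)
      have hjd : j / 2 < 2 ^ (p + 1) := by
        rw [Nat.div_lt_iff_lt_mul (by norm_num)]
        calc j < 2 ^ (p + 2) := hj
        _ = 2 ^ (p + 1) * 2 := by rw [pow_succ]
      have hnuc := nu_cast (p + 2) (by omega) (j / 2) (by simpa using hjd)
      -- LHS cast
      have hlhs : (((if j % 2 = 0 then 1 - nu (p + 2) (j / 2) else nu (p + 2) (j / 2)) : ℕ) : ZMod 2)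
          = 1 + ((j : ℕ) : ZMod 2) + ((nu (p + 2) (j / 2) : ℕ) : ZMod 2) := by
        have hj2 : ((j : ℕ) : ZMod 2) = ((j % 2 : ℕ) : ZMod 2) := (ZMod.natCast_mod j 2).symm
        split
        · next h =>
          rw [aux_cast_one_sub hnu_le, hj2, h]
          push_cast
          ring
        · next h =>
          have : j % 2 = 1 := by omega
          rw [hj2, this]
          push_cast
          rw [show (1:ZMod 2) + 1 = 0 by decide, zero_add]
      rw [hlhs, Fb_cast]
      rw [if_neg (by omega)]
      rw [Finset.sum_range_succ']
      have hf0 : ((Nat.choose (p + 1) 0 : ℕ) : ZMod 2) * ((j / 2 ^ 0 : ℕ) : ZMod 2) = (j : ZMod 2) := by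
        simp
      rw [hf0]
      have hsum : ∑ i ∈ Finset.range (p + 1),
          ((Nat.choose (p + 1) (i + 1) : ℕ) : ZMod 2) * ((j / 2 ^ (i + 1) : ℕ) : ZMod 2)
          = ((nu (p + 2) (j / 2) : ℕ) : ZMod 2) := by
        rw [hnuc]
        simp only [show p + 2 - 1 = p + 1 from rfl, show ∀ i, p + 2 - 2 - i = p - i from fun i => rfl]
        apply Finset.sum_congr rfl
        intro i hi
        rw [Finset.mem_range] at hi
        rw [mul_comm]
        congr 2
        · rw [Nat.div_div_eq_div_mul, ← pow_succ']
        · rw [← Nat.choose_symm (by omega : i + 1 ≤ p + 1), show p + 1 - (i + 1) = p - i by omega]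
      rw [hsum]
      ring

/-! ### Digit lemmas -/

lemma digits_spec (n : ℕ) (d : ℕ → ℕ) (hd : ∀ k < n, d k ≤ 1) :
    (∑ k ∈ Finset.range n, 2 ^ k * d k) < 2 ^ n ∧
    ∀ i < n, (∑ k ∈ Finset.range n, 2 ^ k * d k) / 2 ^ i % 2 = d i := by
  induction n generalizing d with
  | zero => simp
  | succ n ih =>
    obtain ⟨ihlt, ihval⟩ := ih (fun k => d (k + 1)) (fun k hk => hd (k + 1) (by omega))
    have key : ∑ k ∈ Finset.range (n + 1), 2 ^ k * d k
        = d 0 + 2 * ∑ k ∈ Finset.range n, 2 ^ k * d (k + 1) := by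
      rw [Finset.sum_range_succ']
      rw [Finset.mul_sum]
      simp only [pow_succ, pow_zero, one_mul]
      rw [add_comm]
      congr 1
      apply Finset.sum_congr rfl
      intro k _
      ring
    have hd0 := hd 0 (by omega)
    constructor
    · rw [key, pow_succ]
      omega
    · intro i hi
      rw [key]
      cases i with
      | zero =>
        simp only [pow_zero, Nat.div_one]
        omega
      | succ i =>
        have hdd : (d 0 + 2 * ∑ k ∈ Finset.range n, 2 ^ k * d (k + 1)) / 2 ^ (i + 1)
            = (∑ k ∈ Finset.range n, 2 ^ k * d (k + 1)) / 2 ^ i := by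
          rw [pow_succ', ← Nat.div_div_eq_div_mul]
          congr 1
          omega
        rw [hdd]
        exact ihval i (by omega)

lemma digits_sum (n : ℕ) : ∀ j < 2 ^ n, ∑ k ∈ Finset.range n, 2 ^ k * (j / 2 ^ k % 2) = j := by
  induction n with
  | zero =>
    intro j hj
    simp only [pow_zero] at hj
    simp
    omega
  | succ n ih =>
    intro j hj
    rw [Finset.sum_range_succ']
    have hterm : ∀ k, 2 ^ (k + 1) * (j / 2 ^ (k + 1) % 2) = 2 * (2 ^ k * ((j / 2) / 2 ^ k % 2)) := by
      intro k
      rw [show j / 2 ^ (k + 1) = (j / 2) / 2 ^ k by rw [Nat.div_div_eq_div_mul, ← pow_succ']]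
      ring
    simp only [hterm, pow_zero, one_mul, Nat.pow_zero, Nat.div_one]
    rw [← Finset.mul_sum]
    rw [ih (j / 2) (by rw [pow_succ] at hj; omega)]
    omega

/-! ### The Pascal matrix mod 2 is an involution -/

lemma choose_sq_sum (K l : ℕ) (h : l ≤ K) :
    ∑ t ∈ Finset.range (K + 1), Nat.choose K t * Nat.choose t l
      = Nat.choose K l * 2 ^ (K - l) := by
  rw [Finset.range_eq_Ico, ← Finset.sum_Ico_consecutive _ (Nat.zero_le l) (by omega : l ≤ K + 1)]
  have h1 : ∑ t ∈ Finset.Ico 0 l, Nat.choose K t * Nat.choose t l = 0 := by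
    apply Finset.sum_eq_zero
    intro t ht
    rw [Finset.mem_Ico] at ht
    rw [Nat.choose_eq_zero_of_lt ht.2, mul_zero]
  rw [h1, zero_add, Finset.sum_Ico_eq_sum_range]
  have h2 : ∀ t ∈ Finset.range (K + 1 - l),
      Nat.choose K (l + t) * Nat.choose (l + t) l = Nat.choose K l * Nat.choose (K - l) t := by
    intro t ht
    rw [Finset.mem_range] at ht
    rw [Nat.choose_mul (n := K) (by omega : l ≤ l + t),
      Nat.add_sub_cancel_left]
  rw [Finset.sum_congr rfl h2, ← Finset.mul_sum]
  congr 1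
  rw [show K + 1 - l = (K - l) + 1 by omega]
  exact Nat.sum_range_choose (K - l)

lemma Fb_invol (n j : ℕ) (hj : j < 2 ^ n) (i : ℕ) (hi : i < n) :
    Fb i (∑ k ∈ Finset.range n, 2 ^ k * Fb k j) = j / 2 ^ i % 2 := by
  set s := ∑ k ∈ Finset.range n, 2 ^ k * Fb k j with hs
  obtain ⟨hslt, hsdig⟩ := digits_spec n (fun k => Fb k j) (fun k _ => Fb_le_one k j)
  apply aux_eq_of_le_one_cast (Fb_le_one _ _) (aux_mod_two_le _)
  cases i with
  | zero =>
    rw [Fb, if_pos rfl]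
    have h0 := hsdig 0 (by omega)
    simp only [pow_zero, Nat.div_one] at h0 ⊢
    rw [h0]
    rw [Fb, if_pos rfl]
  | succ q =>
    have hq1 : q + 1 ≠ 0 := by omega
    rw [Fb_cast, if_neg hq1, ZMod.natCast_mod]
    -- replace s/2^t by Fb t j
    have hsb : ∀ t < q + 2, ((s / 2 ^ t : ℕ) : ZMod 2) = ((Fb t j : ℕ) : ZMod 2) := by
      intro t ht
      rw [← ZMod.natCast_mod (s / 2 ^ t) 2, hsdig t (by omega)]
    have step1 : ∑ t ∈ Finset.range (q + 2),
        ((Nat.choose (q + 1) t : ℕ) : ZMod 2) * ((s / 2 ^ t : ℕ) : ZMod 2)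
        = ∑ t ∈ Finset.range (q + 2),
        ((Nat.choose (q + 1) t : ℕ) : ZMod 2) * ((Fb t j : ℕ) : ZMod 2) := by
      apply Finset.sum_congr rfl
      intro t ht
      rw [Finset.mem_range] at ht
      rw [hsb t ht]
    rw [step1]
    -- expand Fb t j
    have hFb : ∀ t, ((Fb t j : ℕ) : ZMod 2) = (if t = 0 then 0 else 1)
        + ∑ l ∈ Finset.range (t + 1),
            ((Nat.choose t l : ℕ) : ZMod 2) * ((j / 2 ^ l : ℕ) : ZMod 2) := by
      intro t
      rw [Fb_cast]
      split
      · next h => subst h; simp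
      · rfl
    have step2 : ∑ t ∈ Finset.range (q + 2),
        ((Nat.choose (q + 1) t : ℕ) : ZMod 2) * ((Fb t j : ℕ) : ZMod 2)
        = (∑ t ∈ Finset.range (q + 2),
            ((Nat.choose (q + 1) t : ℕ) : ZMod 2) * (if t = 0 then 0 else 1))
          + ∑ t ∈ Finset.range (q + 2), ∑ l ∈ Finset.range (t + 1),
            ((Nat.choose (q + 1) t : ℕ) : ZMod 2) *
              (((Nat.choose t l : ℕ) : ZMod 2) * ((j / 2 ^ l : ℕ) : ZMod 2)) := by
      rw [← Finset.sum_add_distrib]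
      apply Finset.sum_congr rfl
      intro t _
      rw [hFb t, mul_add, Finset.mul_sum]
    rw [step2]
    -- A = 1
    have hA : (∑ t ∈ Finset.range (q + 2),
        ((Nat.choose (q + 1) t : ℕ) : ZMod 2) * (if t = 0 then 0 else 1)) = 1 := by
      have hall : ((2 ^ (q + 1) : ℕ) : ZMod 2) = 0 := aux_two_pow_cast_zero (by omega)
      rw [← Nat.sum_range_choose (q + 1), Nat.cast_sum] at hall
      rw [Finset.sum_range_succ'] at hall
      rw [Finset.sum_range_succ']
      have e1 : ∀ k ∈ Finset.range (q + 1),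
          ((Nat.choose (q + 1) (k + 1) : ℕ) : ZMod 2) * (if k + 1 = 0 then (0:ZMod 2) else 1)
          = ((Nat.choose (q + 1) (k + 1) : ℕ) : ZMod 2) := by
        intro k _
        rw [if_neg (Nat.succ_ne_zero k), mul_one]
      rw [Finset.sum_congr rfl e1, if_pos rfl, mul_zero, add_zero]
      rw [show ((Nat.choose (q + 1) 0 : ℕ) : ZMod 2) = 1 by simp] at hall
      have h := eq_neg_of_add_eq_zero_left hall
      rw [h]
      decide
    rw [hA]
    -- B: extend inner sums and swap
    have hext : ∀ t ∈ Finset.range (q + 2), ∑ l ∈ Finset.range (t + 1),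
        ((Nat.choose (q + 1) t : ℕ) : ZMod 2) *
          (((Nat.choose t l : ℕ) : ZMod 2) * ((j / 2 ^ l : ℕ) : ZMod 2))
        = ∑ l ∈ Finset.range (q + 2),
        ((Nat.choose (q + 1) t : ℕ) : ZMod 2) *
          (((Nat.choose t l : ℕ) : ZMod 2) * ((j / 2 ^ l : ℕ) : ZMod 2)) := by
      intro t ht
      rw [Finset.mem_range] at ht
      apply Finset.sum_subset
      · intro l hl
        rw [Finset.mem_range] at *
        omega
      · intro l _ hl
        rw [Finset.mem_range] at hl
        rw [Nat.choose_eq_zero_of_lt (by omega : t < l)]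
        simp
    rw [Finset.sum_congr rfl hext, Finset.sum_comm]
    have hB : ∀ l ∈ Finset.range (q + 2), ∑ t ∈ Finset.range (q + 2),
        ((Nat.choose (q + 1) t : ℕ) : ZMod 2) *
          (((Nat.choose t l : ℕ) : ZMod 2) * ((j / 2 ^ l : ℕ) : ZMod 2))
        = (if l = q + 1 then 1 else 0) * ((j / 2 ^ l : ℕ) : ZMod 2) := by
      intro l hl
      rw [Finset.mem_range] at hl
      have : ∑ t ∈ Finset.range (q + 2),
          ((Nat.choose (q + 1) t : ℕ) : ZMod 2) * ((Nat.choose t l : ℕ) : ZMod 2)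
          = if l = q + 1 then 1 else 0 := by
        have hnat := choose_sq_sum (q + 1) l (by omega)
        have hcast : ((∑ t ∈ Finset.range (q + 2), Nat.choose (q + 1) t * Nat.choose t l : ℕ) : ZMod 2)
            = ((Nat.choose (q + 1) l * 2 ^ (q + 1 - l) : ℕ) : ZMod 2) := by rw [hnat]
        push_cast at hcast
        rw [hcast]
        by_cases hlq : l = q + 1
        · subst hlq
          simp
        · rw [if_neg hlq]
          rw [show ((2:ZMod 2)) = 0 by decide, zero_pow (by omega : q + 1 - l ≠ 0)]
          ring
      calc ∑ t ∈ Finset.range (q + 2),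
          ((Nat.choose (q + 1) t : ℕ) : ZMod 2) *
            (((Nat.choose t l : ℕ) : ZMod 2) * ((j / 2 ^ l : ℕ) : ZMod 2))
          = (∑ t ∈ Finset.range (q + 2),
            ((Nat.choose (q + 1) t : ℕ) : ZMod 2) * ((Nat.choose t l : ℕ) : ZMod 2))
              * ((j / 2 ^ l : ℕ) : ZMod 2) := by
            rw [Finset.sum_mul]
            apply Finset.sum_congr rfl
            intro t _
            ring
        _ = (if l = q + 1 then 1 else 0) * ((j / 2 ^ l : ℕ) : ZMod 2) := by rw [this]
    rw [Finset.sum_congr rfl hB]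
    simp only [ite_mul, one_mul, zero_mul]
    rw [Finset.sum_ite_eq' (Finset.range (q + 2)) (q + 1)
      (fun l => ((j / 2 ^ l : ℕ) : ZMod 2))]
    rw [if_pos (Finset.mem_range.mpr (by omega : q + 1 < q + 2))]
    rw [← add_assoc, show (1:ZMod 2) + 1 = 0 by decide, zero_add]


/-- For every `n ≥ 1`, the map `σ̂ₙ` is an involution on
`Iₙ = {0, 1, …, 2ⁿ−1}`. -/
theorem sigmaHat_involutive (n : ℕ) (hn : 1 ≤ n) :
    ∀ k < 2 ^ n, sigmaHat n (sigmaHat n k) = k := by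
  intro k hk
  obtain ⟨hslt, -⟩ := digits_spec n (fun i => Fb i k) (fun i _ => Fb_le_one i k)
  rw [sigmaHat_eq n hn k hk, sigmaHat_eq n hn _ hslt]
  rw [Finset.sum_congr rfl (fun i hi => by
    rw [Fb_invol n k hk i (Finset.mem_range.mp hi)])]
  exact digits_sum n k hk
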